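/- arXiv:1510.02010 — 2 statements merged into one kernel-verified Lean document; each statement's English description precedes it below -/
import Mathlib

section
/- Define $\Xi(x)=\inf_{0<\beta<1}\frac{\beta e^{-\beta x}}{(1-\beta)(1-e^{-\beta x})}$ for $x>0$. Then $\Xi(x)=1/x$ for all $0<x\le 2$. -/
private lemma key (t : ℝ) (ht : 0 ≤ t) : (2 - t) * Real.exp t ≤ 2 + t := by
  have hmono : Monotone (fun s : ℝ => 2 + s - (2 - s) * Real.exp s) := by
    have hd : ∀ s : ℝ, HasDerivAt (fun s : ℝ => 2 + s - (2 - s) * Real.exp s)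
        (1 - (1 - s) * Real.exp s) s := by
      intro s
      have h1 : HasDerivAt (fun s : ℝ => (2 - s) * Real.exp s)
          ((-1) * Real.exp s + (2 - s) * Real.exp s) s :=
        ((hasDerivAt_id s).const_sub 2).mul (Real.hasDerivAt_exp s)
      have h2 : HasDerivAt (fun s : ℝ => 2 + s) 1 s :=
        (hasDerivAt_id s).const_add 2
      have : HasDerivAt (fun s : ℝ => 2 + s - (2 - s) * Real.exp s)
          (1 - ((-1) * Real.exp s + (2 - s) * Real.exp s)) s := h2.sub h1
      convert this using 1
      ring
    apply monotone_of_deriv_nonneg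
    · exact fun s => (hd s).differentiableAt
    · intro s
      rw [(hd s).deriv]
      have h3 : -s + 1 ≤ Real.exp (-s) := Real.add_one_le_exp (-s)
      have h4 : (1 - s) * Real.exp s ≤ Real.exp (-s) * Real.exp s := by
        apply mul_le_mul_of_nonneg_right _ (Real.exp_pos s).le
        linarith
      rw [← Real.exp_add] at h4
      simp at h4
      linarith
  have := hmono ht
  simp only [Real.exp_zero] at this
  linarith [this]


private lemma lb (x β : ℝ) (hx0 : 0 < x) (hx2 : x ≤ 2) (hβ : β ∈ Set.Ioo 0 1) :
    1 / x ≤ β * Real.exp (-β * x) / ((1 - β) * (1 - Real.exp (-β * x))) := by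
  obtain ⟨hβ0, hβ1⟩ := hβ
  have ht0 : 0 < β * x := mul_pos hβ0 hx0
  have hE : 1 < Real.exp (β * x) := by
    rw [show (1:ℝ) = Real.exp 0 by simp]
    exact Real.exp_lt_exp.mpr ht0
  have he : Real.exp (-(β * x)) < 1 := by
    rw [Real.exp_lt_one_iff]; linarith
  have hepos : 0 < Real.exp (-(β * x)) := Real.exp_pos _
  have hD : 0 < (1 - β) * (1 - Real.exp (-(β * x))) := by
    apply mul_pos <;> linarith
  have hk := key (β * x) ht0.le
  have hee : Real.exp (-(β * x)) * Real.exp (β * x) = 1 := by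
    rw [← Real.exp_add]; simp
  rw [show -β * x = -(β * x) by ring, div_le_div_iff₀ hx0 hD]
  -- goal: 1 * ((1-β)*(1-e)) ≤ β * e * x
  -- know: (2 - t) * E ≤ 2 + t, e*E = 1, t = β x, 1-β ≤ 1 - t/2 i.e. 2(1-β) ≤ 2 - t since x ≤ 2
  have h2 : 2 * (1 - β) ≤ 2 - β * x := by nlinarith
  have hE0 : 0 < Real.exp (β * x) := Real.exp_pos _
  -- (2-t)(1-e) ≤ 2 t e  ⟺ multiply key by e:  (2-t)(E e) - (2-t) e = (2-t) - (2-t)e ... 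
  nlinarith [mul_le_mul_of_nonneg_right hk hepos.le,
    mul_le_mul_of_nonneg_right h2 (sub_pos.mpr he).le]

private lemma ub (x β : ℝ) (hx0 : 0 < x) (hβ : β ∈ Set.Ioo 0 1) :
    β * Real.exp (-β * x) / ((1 - β) * (1 - Real.exp (-β * x))) ≤ 1 / ((1 - β) * x) := by
  obtain ⟨hβ0, hβ1⟩ := hβ
  have ht0 : 0 < β * x := mul_pos hβ0 hx0
  have he : Real.exp (-(β * x)) < 1 := by
    rw [Real.exp_lt_one_iff]; linarith
  have hepos : 0 < Real.exp (-(β * x)) := Real.exp_pos _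
  have hD : 0 < (1 - β) * (1 - Real.exp (-(β * x))) := by
    apply mul_pos <;> linarith
  have hDx : 0 < (1 - β) * x := mul_pos (by linarith) hx0
  have hkey : β * x * Real.exp (-(β * x)) ≤ 1 - Real.exp (-(β * x)) := by
    have h1 : β * x + 1 ≤ Real.exp (β * x) := Real.add_one_le_exp _
    have := mul_le_mul_of_nonneg_right h1 hepos.le
    rw [← Real.exp_add] at this
    simp at this
    nlinarith
  rw [show -β * x = -(β * x) by ring, div_le_div_iff₀ hD hDx]
  nlinarith [mul_le_mul_of_nonneg_left hkey (by linarith : (0:ℝ) ≤ 1 - β)]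


noncomputable def Xi (x : ℝ) : ℝ :=
  sInf ((fun β : ℝ => β * Real.exp (-β * x) /
    ((1 - β) * (1 - Real.exp (-β * x)))) '' Set.Ioo 0 1)

theorem stmt2 (x : ℝ) (hx0 : 0 < x) (hx2 : x ≤ 2) : Xi x = 1 / x := by
  set f : ℝ → ℝ := fun β : ℝ => β * Real.exp (-β * x) /
    ((1 - β) * (1 - Real.exp (-β * x))) with hf
  have hbdd : BddBelow (f '' Set.Ioo 0 1) := by
    refine ⟨1 / x, ?_⟩
    rintro y ⟨β, hβ, rfl⟩
    exact lb x β hx0 hx2 hβ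
  have hne : (f '' Set.Ioo 0 1).Nonempty :=
    ⟨f (1/2), ⟨1/2, by norm_num, rfl⟩⟩
  apply le_antisymm
  · apply le_of_forall_pos_le_add
    intro ε hε
    set β : ℝ := min (1/2) (ε * x / 2) with hβdef
    have hβ0 : 0 < β := lt_min (by norm_num) (by positivity)
    have hβh : β ≤ 1/2 := min_le_left _ _
    have hβε : β ≤ ε * x / 2 := min_le_right _ _
    have hβmem : β ∈ Set.Ioo 0 1 := ⟨hβ0, by linarith⟩
    have h1 : f β ≤ 1 / ((1 - β) * x) := ub x β hx0 hβmem
    have h2 : 1 / ((1 - β) * x) ≤ 1 / x + ε := by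
      have h1β : (0:ℝ) < (1 - β) * x := mul_pos (by linarith) hx0
      rw [div_le_iff₀ h1β]
      have : 1 / x * x = 1 := by field_simp
      nlinarith
    calc Xi x ≤ f β := csInf_le hbdd ⟨β, hβmem, rfl⟩
    _ ≤ 1 / x + ε := h1.trans h2
  · apply le_csInf hne
    rintro y ⟨β, hβ, rfl⟩
    exact lb x β hx0 hx2 hβ
end

section
/- With $\Xi(x)=\inf_{0<\beta<1}\frac{\beta e^{-\beta x}}{(1-\beta)(1-e^{-\beta x})}$, one has $\lim_{x\to\infty}\frac{\Xi(x)}{x e^{-(x-1)}}=1$. -/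
open Real Filter

lemma exp_sqrt_ge (x : ℝ) (hx : 0 ≤ x) : x^3 / 46656 ≤ Real.exp (Real.sqrt x) := by
  have h0 : 0 ≤ Real.sqrt x := Real.sqrt_nonneg x
  have h1 : Real.sqrt x / 6 + 1 ≤ Real.exp (Real.sqrt x / 6) := Real.add_one_le_exp _
  have h2 : (Real.sqrt x / 6) ^ 6 ≤ (Real.exp (Real.sqrt x / 6)) ^ 6 := by
    apply pow_le_pow_left₀ (by positivity)
    linarith
  have h3 : (Real.exp (Real.sqrt x / 6)) ^ 6 = Real.exp (Real.sqrt x) := by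
    rw [← Real.exp_nat_mul]
    norm_num
    ring
  have h4 : (Real.sqrt x) ^ 6 = x ^ 3 := by
    rw [show (6:ℕ) = 2*3 from rfl, pow_mul, Real.sq_sqrt hx]
  calc x^3/46656 = (Real.sqrt x / 6)^6 := by rw [div_pow, h4]; norm_num
    _ ≤ _ := h3 ▸ h2

lemma key_s4 (x : ℝ) (hx : 140000 ≤ x) (β : ℝ) (hβ0 : 0 < β) (hβ1 : β < 1) :
    (x - Real.sqrt x) * Real.exp (1 - x) * ((1 - β) * (Real.exp (β * x) - 1)) ≤ β := by
  have hx0 : (0:ℝ) < x := by linarith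
  have hsx : Real.sqrt x ≤ x := Real.sqrt_le_iff.mpr ⟨le_of_lt hx0, by nlinarith⟩
  have hsx0 : 0 ≤ Real.sqrt x := Real.sqrt_nonneg x
  have hsx1 : (1:ℝ) ≤ Real.sqrt x := Real.one_le_sqrt.mpr (by linarith)
  have hxs : 0 ≤ x - Real.sqrt x := by linarith
  set u := β * x with hu
  have hu0 : 0 < u := by positivity
  have hux : u < x := by
    have := mul_lt_mul_of_pos_right hβ1 hx0
    simpa [hu] using this
  have hβx : β = u / x := by field_simp [hu]; exact hu.symm
  have h1b : (1:ℝ) - β = (x - u)/x := by field_simp [hu]; ring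
  have hb : (0:ℝ) ≤ 1 - β := by linarith
  rcases le_or_gt (x - Real.sqrt x) u with h | h
  · -- case A
    have hs : (x - u) * Real.exp (1 - (x - u)) ≤ 1 := by
      have h1 : (x - u - 1) + 1 ≤ Real.exp (x - u - 1) := Real.add_one_le_exp _
      have h2 : Real.exp (1 - (x-u)) = (Real.exp (x - u - 1))⁻¹ := by
        rw [← Real.exp_neg]; ring_nf
      rw [h2, mul_inv_le_iff₀ (Real.exp_pos _)]
      linarith
    have hE : Real.exp (1 - x) * Real.exp u = Real.exp (1 - (x - u)) := by
      rw [← Real.exp_add]; ring_nf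
    have h1 : Real.exp u - 1 ≤ Real.exp u := by linarith [Real.exp_pos u]
    calc (x - Real.sqrt x) * Real.exp (1 - x) * ((1 - β) * (Real.exp u - 1))
        ≤ (x - Real.sqrt x) * Real.exp (1 - x) * ((1 - β) * Real.exp u) := by
          apply mul_le_mul_of_nonneg_left _ (by positivity)
          exact mul_le_mul_of_nonneg_left h1 hb
      _ = (x - Real.sqrt x) * (((x-u) * Real.exp (1 - (x-u)))/x) := by
          rw [h1b, ← hE]; ring
      _ ≤ (x - Real.sqrt x) * (1/x) := by
          exact mul_le_mul_of_nonneg_left ((div_le_div_iff_of_pos_right hx0).mpr hs) hxs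
      _ ≤ β := by
          rw [hβx, mul_one_div]
          exact (div_le_div_iff_of_pos_right hx0).mpr h
  · -- case B
    have h3 : 1 - u ≤ Real.exp (-u) := by
      have := Real.add_one_le_exp (-u); linarith
    have h4 : Real.exp u * (1 - u) ≤ Real.exp u * Real.exp (-u) :=
      mul_le_mul_of_nonneg_left h3 (Real.exp_pos u).le
    rw [← Real.exp_add] at h4
    simp at h4
    have h2 : Real.exp u - 1 ≤ u * Real.exp u := by nlinarith
    have h5 : Real.exp u ≤ Real.exp (x - Real.sqrt x) := Real.exp_le_exp.mpr (le_of_lt h)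
    have hexp1 : Real.exp 1 ≤ 3 := by
      have := Real.exp_one_lt_d9; linarith
    have e1 : Real.exp (-Real.sqrt x) ≤ 46656 / x^3 := by
      have h6 := exp_sqrt_ge x (le_of_lt hx0)
      rw [Real.exp_neg, show (46656:ℝ)/x^3 = (x^3/46656)⁻¹ by rw [inv_div]]
      exact inv_anti₀ (by positivity) h6
    have hkey : (x - Real.sqrt x) * x * Real.exp (1 - Real.sqrt x) ≤ 1 := by
      have hE3 : Real.exp (1 - Real.sqrt x) = Real.exp 1 * Real.exp (-Real.sqrt x) := by
        rw [← Real.exp_add]; ring_nf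
      calc (x - Real.sqrt x) * x * Real.exp (1 - Real.sqrt x)
          = (x - Real.sqrt x) * x * (Real.exp 1 * Real.exp (-Real.sqrt x)) := by rw [hE3]
        _ ≤ x * x * (3 * (46656 / x^3)) := by
            gcongr
            · linarith
        _ = 139968 / x := by field_simp; ring
        _ ≤ 1 := by rw [div_le_one hx0]; linarith
    have hA : (0:ℝ) ≤ Real.exp u - 1 := by
      have : (1:ℝ) ≤ Real.exp u := Real.one_le_exp hu0.le
      linarith
    have s1 : (1-β) * (Real.exp u - 1) ≤ Real.exp u - 1 := by nlinarith
    have s2 : u * Real.exp u ≤ u * Real.exp (x - Real.sqrt x) :=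
      mul_le_mul_of_nonneg_left h5 hu0.le
    have c1 : (1-β) * (Real.exp u - 1) ≤ u * Real.exp (x - Real.sqrt x) :=
      le_trans (s1.trans h2) s2
    have hE2 : Real.exp (1-x) * Real.exp (x - Real.sqrt x) = Real.exp (1 - Real.sqrt x) := by
      rw [← Real.exp_add]; ring_nf
    calc (x - Real.sqrt x) * Real.exp (1 - x) * ((1 - β) * (Real.exp u - 1))
        ≤ (x - Real.sqrt x) * Real.exp (1 - x) * (u * Real.exp (x - Real.sqrt x)) := by
          apply mul_le_mul_of_nonneg_left c1 (by positivity)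
      _ = (x - Real.sqrt x) * Real.exp (1 - x) * ((β * x) * Real.exp (x - Real.sqrt x)) := by
          rw [← hu]
      _ = β * ((x - Real.sqrt x) * x * (Real.exp (1-x) * Real.exp (x - Real.sqrt x))) := by
          ring
      _ = β * ((x - Real.sqrt x) * x * Real.exp (1 - Real.sqrt x)) := by rw [hE2]
      _ ≤ β * 1 := mul_le_mul_of_nonneg_left hkey hβ0.le
      _ = β := mul_one β

lemma Xi_lower (x : ℝ) (hx : 140000 ≤ x) :
    (x - Real.sqrt x) * Real.exp (-(x - 1)) ≤ Xi x := by
  have hx0 : (0:ℝ) < x := by linarith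
  apply le_csInf
  · exact ⟨_, ⟨(1:ℝ)/2, ⟨by norm_num, by norm_num⟩, rfl⟩⟩
  · rintro b ⟨β, ⟨hβ0, hβ1⟩, rfl⟩
    have hE1 : Real.exp (-β * x) < 1 := by
      apply Real.exp_lt_one_iff.mpr
      nlinarith
    have hD : 0 < (1 - β) * (1 - Real.exp (-β * x)) :=
      mul_pos (by linarith) (by linarith)
    rw [le_div_iff₀ hD]
    have hrw : 1 - Real.exp (-β * x) = Real.exp (-β * x) * (Real.exp (β * x) - 1) := by
      have h : Real.exp (-β * x) * Real.exp (β * x) = 1 := by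
        rw [← Real.exp_add]; ring_nf; exact Real.exp_zero
      nlinarith
    have hco : -(x - 1) = 1 - x := by ring
    calc (x - Real.sqrt x) * Real.exp (-(x-1)) * ((1 - β) * (1 - Real.exp (-β * x)))
        = ((x - Real.sqrt x) * Real.exp (1 - x) * ((1 - β) * (Real.exp (β * x) - 1)))
            * Real.exp (-β * x) := by rw [hco, hrw]; ring
      _ ≤ β * Real.exp (-β * x) :=
          mul_le_mul_of_nonneg_right (key_s4 x hx β hβ0 hβ1) (Real.exp_pos _).le

lemma Xi_upper (x : ℝ) (hx : 2 ≤ x) :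
    Xi x ≤ (x - 1) * Real.exp (-(x - 1)) / (1 - Real.exp (-(x - 1))) := by
  have hx0 : (0:ℝ) < x := by linarith
  have hxne : x ≠ 0 := ne_of_gt hx0
  have hβ0 : (0:ℝ) < 1 - 1/x := by
    have : 1/x < 1 := by rw [div_lt_one hx0]; linarith
    linarith
  have hβ1 : 1 - 1/x < 1 := by
    have : (0:ℝ) < 1/x := by positivity
    linarith
  have hE1 : Real.exp (-(x - 1)) < 1 := Real.exp_lt_one_iff.mpr (by linarith)
  have harg : -(1 - 1/x) * x = -(x - 1) := by field_simp
  apply csInf_le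
  · -- bdd below by 0
    refine ⟨0, ?_⟩
    rintro b ⟨β, ⟨hb0, hb1⟩, rfl⟩
    have hE : Real.exp (-β * x) < 1 := Real.exp_lt_one_iff.mpr (by nlinarith)
    apply div_nonneg
    · positivity
    · apply mul_nonneg <;> linarith
  · refine ⟨1 - 1/x, ⟨hβ0, hβ1⟩, ?_⟩
    simp only [harg]
    have h1 : 1 - (1 - 1/x) = 1/x := by ring
    rw [h1]
    have hd1 : 0 < (1/x) * (1 - Real.exp (-(x-1))) := mul_pos (by positivity) (by linarith)
    rw [div_eq_div_iff (ne_of_gt hd1) (by intro hc; nlinarith : 1 - Real.exp (-(x-1)) ≠ 0)]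
    field_simp

lemma sqrt_tendsto : Tendsto Real.sqrt atTop atTop := by
  apply Filter.tendsto_atTop_atTop.mpr
  intro b
  refine ⟨(max b 0)^2, fun a ha => ?_⟩
  calc b ≤ max b 0 := le_max_left _ _
    _ = Real.sqrt ((max b 0)^2) := (Real.sqrt_sq (le_max_right _ _)).symm
    _ ≤ Real.sqrt a := Real.sqrt_le_sqrt ha

theorem stmt4 :
    Filter.Tendsto (fun x : ℝ => Xi x / (x * Real.exp (-(x - 1)))) Filter.atTop
      (nhds 1) := by
  have hEx : ∀ x : ℝ, (0:ℝ) < Real.exp (-(x-1)) := fun x => Real.exp_pos _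
  -- lower squeeze function
  have hlo : Tendsto (fun x : ℝ => 1 - (Real.sqrt x)⁻¹) atTop (nhds 1) := by
    have h1 : Tendsto (fun x : ℝ => (Real.sqrt x)⁻¹) atTop (nhds 0) :=
      tendsto_inv_atTop_zero.comp sqrt_tendsto
    have := tendsto_const_nhds (x := (1:ℝ)) (f := atTop (α := ℝ)) |>.sub h1
    simpa using this
  -- upper squeeze function
  have hexp0 : Tendsto (fun x : ℝ => Real.exp (-(x-1))) atTop (nhds 0) := by
    apply Real.tendsto_exp_atBot.comp
    have h1 : Tendsto (fun x : ℝ => x - 1) atTop atTop :=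
      tendsto_atTop_add_const_right atTop (-1) tendsto_id
    exact tendsto_neg_atTop_atBot.comp h1
  have hhi : Tendsto (fun x : ℝ => (x-1)/(x*(1 - Real.exp (-(x-1))))) atTop (nhds 1) := by
    have h1 : Tendsto (fun x : ℝ => (x-1)/x) atTop (nhds 1) := by
      have h2 : Tendsto (fun x : ℝ => 1 - x⁻¹) atTop (nhds 1) := by
        have := tendsto_const_nhds (x := (1:ℝ)) (f := atTop (α := ℝ)) |>.sub
          tendsto_inv_atTop_zero
        simpa using this
      apply h2.congr'
      filter_upwards [eventually_gt_atTop (0:ℝ)] with x hx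
      field_simp
    have h3 : Tendsto (fun x : ℝ => (1 - Real.exp (-(x-1)))⁻¹) atTop (nhds 1) := by
      have h4 : Tendsto (fun x : ℝ => 1 - Real.exp (-(x-1))) atTop (nhds 1) := by
        have := tendsto_const_nhds (x := (1:ℝ)) (f := atTop (α := ℝ)) |>.sub hexp0
        simpa using this
      have := h4.inv₀ (by norm_num)
      simpa using this
    have h5 := h1.mul h3
    rw [mul_one] at h5
    apply h5.congr
    intro x
    rw [← div_div]
    ring
  apply tendsto_of_tendsto_of_tendsto_of_le_of_le' hlo hhi
  · -- lower bound eventually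
    filter_upwards [eventually_ge_atTop (140000:ℝ)] with x hx
    have hx0 : (0:ℝ) < x := by linarith
    have hs0 : (0:ℝ) < Real.sqrt x := Real.sqrt_pos.mpr hx0
    have hden : 0 < x * Real.exp (-(x-1)) := by positivity
    have hxx : Real.sqrt x * Real.sqrt x = x := Real.mul_self_sqrt hx0.le
    have h1 : ((x - Real.sqrt x) * Real.exp (-(x-1))) / (x * Real.exp (-(x-1)))
        ≤ Xi x / (x * Real.exp (-(x-1))) :=
      (div_le_div_iff_of_pos_right hden).mpr (Xi_lower x hx)
    have h2 : ((x - Real.sqrt x) * Real.exp (-(x-1))) / (x * Real.exp (-(x-1)))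
        = (x - Real.sqrt x) / x := by
      rw [mul_div_mul_right _ _ (ne_of_gt (hEx x))]
    have h3 : (x - Real.sqrt x) / x = 1 - (Real.sqrt x)⁻¹ := by
      rw [div_eq_iff (ne_of_gt hx0)]
      field_simp
      linarith [hxx]
    rw [h2, h3] at h1
    exact h1
  · -- upper bound eventually
    filter_upwards [eventually_ge_atTop (140000:ℝ)] with x hx
    have hx0 : (0:ℝ) < x := by linarith
    have hE1 : Real.exp (-(x - 1)) < 1 := Real.exp_lt_one_iff.mpr (by linarith)
    have hden : 0 < x * Real.exp (-(x-1)) := by positivity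
    have h1 : Xi x / (x * Real.exp (-(x-1)))
        ≤ ((x - 1) * Real.exp (-(x - 1)) / (1 - Real.exp (-(x - 1)))) / (x * Real.exp (-(x-1))) :=
      (div_le_div_iff_of_pos_right hden).mpr (Xi_upper x (by linarith))
    have h2 : ((x - 1) * Real.exp (-(x - 1)) / (1 - Real.exp (-(x - 1)))) / (x * Real.exp (-(x-1)))
        = (x - 1) / (x * (1 - Real.exp (-(x-1)))) := by
      rw [div_div, ← mul_assoc, mul_div_mul_right _ _ (ne_of_gt (hEx x)), mul_comm]
    rw [h2] at h1
    exact h1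
end
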